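/- Suppose μ·p·S₀^{1−q} = (1−q)·β·I₀^p. Then S(t) → 0 and I(t) → 0 as t → ∞. -/
import Mathlib

open Filter Topology

lemma myAnti {a : ℝ} {f : ℝ → ℝ} (hf : ContinuousOn f (Set.Ici a))
    (h : ∀ x, a < x → ∃ d, HasDerivAt f d x ∧ d ≤ 0) : AntitoneOn f (Set.Ici a) := by
  apply antitoneOn_of_deriv_nonpos (convex_Ici a) hf
  · intro x hx
    rw [interior_Ici] at hx
    obtain ⟨d, hd, _⟩ := h x hx
    exact hd.differentiableAt.differentiableWithinAt
  · intro x hx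
    rw [interior_Ici] at hx
    obtain ⟨d, hd, hd0⟩ := h x hx
    rw [hd.deriv]; exact hd0

lemma myMono {a b : ℝ} {f : ℝ → ℝ} (hf : ContinuousOn f (Set.Icc a b))
    (h : ∀ x, a < x → x < b → ∃ d, HasDerivAt f d x ∧ 0 ≤ d) : MonotoneOn f (Set.Icc a b) := by
  apply monotoneOn_of_deriv_nonneg (convex_Icc a b) hf
  · intro x hx
    rw [interior_Icc] at hx
    obtain ⟨d, hd, _⟩ := h x hx.1 hx.2
    exact hd.differentiableAt.differentiableWithinAt
  · intro x hx
    rw [interior_Icc] at hx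
    obtain ⟨d, hd, hd0⟩ := h x hx.1 hx.2
    rw [hd.deriv]; exact hd0

theorem stmt5 (β μ p q S₀ I₀ : ℝ) (S I : ℝ → ℝ)
    (hβ : 0 < β) (hμ : 0 < μ) (hp : 0 < p) (hq0 : 0 < q) (hq1 : q < 1)
    (hS₀ : 0 < S₀) (hI₀ : 0 < I₀) (hS0 : S 0 = S₀) (hI0 : I 0 = I₀)
    (hScont : ContinuousOn S (Set.Ici 0)) (hIcont : ContinuousOn I (Set.Ici 0))
    (hSnonneg : ∀ t : ℝ, 0 ≤ t → 0 ≤ S t) (hIpos : ∀ t : ℝ, 0 ≤ t → 0 < I t)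
    (hSode : ∀ t : ℝ, 0 < t → HasDerivAt S (-(β * S t ^ q * I t ^ p)) t)
    (hIode : ∀ t : ℝ, 0 < t → HasDerivAt I (β * S t ^ q * I t ^ p - μ * I t) t)
    (heq : μ * p * S₀ ^ (1 - q) = (1 - q) * β * I₀ ^ p) :
    Tendsto S atTop (𝓝 0) ∧ Tendsto I atTop (𝓝 0) := by
  have h1q : 0 < 1 - q := by linarith
  set c : ℝ := μ * p / (1 - q) with hc
  have hcpos : 0 < c := by positivity
  -- S is antitone
  have hSanti : AntitoneOn S (Set.Ici 0) := by
    apply myAnti hScont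
    intro x hx
    refine ⟨_, hSode x hx, ?_⟩
    have h1 : 0 ≤ S x ^ q := Real.rpow_nonneg (hSnonneg x hx.le) q
    have h2 : 0 ≤ I x ^ p := (Real.rpow_pos_of_pos (hIpos x hx.le) p).le
    have : 0 ≤ β * S x ^ q * I x ^ p := by positivity
    linarith
  -- key inequality
  have hkey : ∀ t : ℝ, 0 ≤ t → μ * p * S t ^ (1 - q) ≤ (1 - q) * β * I t ^ p := by
    intro t ht
    rcases (hSnonneg t ht).eq_or_lt with h0 | hpos
    · rw [← h0, Real.zero_rpow (by linarith : (1 : ℝ) - q ≠ 0)]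
      have h1 : 0 < (1 - q) * β * I t ^ p :=
        mul_pos (mul_pos h1q hβ) (Real.rpow_pos_of_pos (hIpos t ht) p)
      nlinarith
    · rcases ht.eq_or_lt with rfl | htpos
      · rw [hS0, hI0]; exact heq.le
      have hSpos : ∀ s ∈ Set.Icc (0:ℝ) t, 0 < S s := fun s hs =>
        lt_of_lt_of_le hpos (hSanti (Set.mem_Ici.2 hs.1) (Set.mem_Ici.2 ht) hs.2)
      have hGmono : MonotoneOn (fun s => (1 - q) * β * I s ^ p - μ * p * S s ^ (1 - q))
          (Set.Icc 0 t) := by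
        apply myMono
        · apply ContinuousOn.sub
          · exact continuousOn_const.mul ((hIcont.mono (fun x hx => hx.1)).rpow_const
              (fun x hx => Or.inr hp.le))
          · exact continuousOn_const.mul (((hScont.mono (fun x hx => Set.mem_Ici.2 hx.1))).rpow_const
              (fun x hx => Or.inr h1q.le))
        · intro s hs0 hst
          have hsI : s ∈ Set.Icc (0:ℝ) t := ⟨hs0.le, hst.le⟩
          have hIb : 0 < I s := hIpos s hs0.le
          have hSb : 0 < S s := hSpos s hsI
          have hdI : HasDerivAt (fun s => I s ^ p)
              ((β * S s ^ q * I s ^ p - μ * I s) * p * I s ^ (p - 1)) s :=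
            (hIode s hs0).rpow_const (Or.inl hIb.ne')
          have hdS : HasDerivAt (fun s => S s ^ (1 - q))
              ((-(β * S s ^ q * I s ^ p)) * (1 - q) * S s ^ (1 - q - 1)) s :=
            (hSode s hs0).rpow_const (Or.inl hSb.ne')
          refine ⟨_, (hdI.const_mul ((1 - q) * β)).sub (hdS.const_mul (μ * p)), ?_⟩
          have e1 : I s ^ (p - 1) * I s = I s ^ p := by
            rw [← Real.rpow_add_one hIb.ne' (p - 1)]; norm_num
          have e2 : S s ^ q * S s ^ (1 - q - 1) = 1 := by
            rw [← Real.rpow_add hSb]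
            have : q + (1 - q - 1) = 0 := by ring
            rw [this, Real.rpow_zero]
          have e3 : (1 - q) * β * ((β * S s ^ q * I s ^ p - μ * I s) * p * I s ^ (p - 1)) -
              μ * p * ((-(β * S s ^ q * I s ^ p)) * (1 - q) * S s ^ (1 - q - 1)) =
              (1 - q) * β * p * β * (S s ^ q) * (I s ^ p) * (I s ^ (p - 1))
              - (1 - q) * β * p * μ * (I s ^ (p - 1) * I s)
              + μ * p * (1 - q) * β * (S s ^ q * S s ^ (1 - q - 1)) * (I s ^ p) := by ring
          rw [e3, e1, e2]
          have h1 : 0 ≤ S s ^ q := (Real.rpow_pos_of_pos hSb q).le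
          have h2 : 0 ≤ I s ^ p := (Real.rpow_pos_of_pos hIb p).le
          have h3 : 0 ≤ I s ^ (p - 1) := (Real.rpow_pos_of_pos hIb (p - 1)).le
          nlinarith [mul_nonneg (mul_nonneg (mul_nonneg
            (by positivity : (0:ℝ) ≤ (1 - q) * β * p * β) h1) h2) h3]
      have := hGmono (Set.left_mem_Icc.2 htpos.le) (Set.right_mem_Icc.2 htpos.le) htpos.le
      simp only [hS0, hI0] at this
      linarith
  -- pointwise bound: c * S t ≤ β * S t ^ q * I t ^ p
  have hSbd : ∀ t : ℝ, 0 ≤ t → c * S t ≤ β * S t ^ q * I t ^ p := by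
    intro t ht
    rcases (hSnonneg t ht).eq_or_lt with h0 | hpos
    · rw [← h0, Real.zero_rpow hq0.ne']
      simp
    · have h := hkey t ht
      have hmul := mul_le_mul_of_nonneg_right h (Real.rpow_nonneg (hSnonneg t ht) q)
      have hSS : S t ^ (1 - q) * S t ^ q = S t := by
        rw [← Real.rpow_add hpos]
        norm_num
      have hmul2 : μ * p * S t ≤ (1 - q) * β * I t ^ p * S t ^ q := by
        calc μ * p * S t = μ * p * (S t ^ (1 - q) * S t ^ q) := by rw [hSS]
          _ = μ * p * S t ^ (1 - q) * S t ^ q := by ring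
          _ ≤ (1 - q) * β * I t ^ p * S t ^ q := hmul
      rw [hc, div_mul_eq_mul_div, div_le_iff₀ h1q]
      linarith [hmul2]
  -- S t ≤ S₀ * exp (-(c * t))
  have hexp : ∀ a t : ℝ, HasDerivAt (fun s => Real.exp (a * s)) (a * Real.exp (a * t)) t := by
    intro a t
    have h : HasDerivAt (fun s : ℝ => a * s) a t := by
      simpa using (hasDerivAt_id t).const_mul a
    have h2 := (Real.hasDerivAt_exp (a * t)).comp t h
    simp only [Function.comp_def] at h2
    simpa [mul_comm] using h2
  have hEanti : AntitoneOn (fun t => S t * Real.exp (c * t)) (Set.Ici 0) := by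
    apply myAnti
    · exact hScont.mul (by fun_prop)
    intro x hx
    refine ⟨_, (hSode x hx).mul (hexp c x), ?_⟩
    have hb := hSbd x hx.le
    have he : 0 < Real.exp (c * x) := Real.exp_pos _
    nlinarith [mul_le_mul_of_nonneg_right hb he.le]
  have hSle : ∀ t : ℝ, 0 ≤ t → S t ≤ S₀ * Real.exp (-(c * t)) := by
    intro t ht
    have h := hEanti (Set.self_mem_Ici) (Set.mem_Ici.2 ht) ht
    simp only [hS0, mul_zero, Real.exp_zero, mul_one] at h
    have he : 0 < Real.exp (c * t) := Real.exp_pos _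
    rw [Real.exp_neg]
    calc S t = S t * Real.exp (c * t) * (Real.exp (c * t))⁻¹ := by field_simp
      _ ≤ S₀ * (Real.exp (c * t))⁻¹ := mul_le_mul_of_nonneg_right h (inv_nonneg.2 he.le)
  have hStend : Tendsto S atTop (𝓝 0) := by
    have hup : Tendsto (fun t => S₀ * Real.exp (-(c * t))) atTop (𝓝 0) := by
      have h1 : Tendsto (fun t : ℝ => -(c * t)) atTop atBot := by
        apply tendsto_neg_atBot_iff.mpr
        exact Tendsto.const_mul_atTop hcpos tendsto_id
      have := Real.tendsto_exp_atBot.comp h1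
      simpa using this.const_mul S₀
    apply squeeze_zero' ?_ ?_ hup
    · filter_upwards [eventually_ge_atTop (0:ℝ)] with t ht using hSnonneg t ht
    · filter_upwards [eventually_ge_atTop (0:ℝ)] with t ht using hSle t ht
  refine ⟨hStend, ?_⟩
  -- I is bounded
  have hSIanti : AntitoneOn (fun t => S t + I t) (Set.Ici 0) := by
    apply myAnti (hScont.add hIcont)
    intro x hx
    refine ⟨_, (hSode x hx).add (hIode x hx), ?_⟩
    have := hIpos x hx.le
    nlinarith
  set M : ℝ := S₀ + I₀ with hM
  have hIM : ∀ t : ℝ, 0 ≤ t → I t ≤ M := by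
    intro t ht
    have h := hSIanti (Set.self_mem_Ici) (Set.mem_Ici.2 ht) ht
    simp only [hS0, hI0] at h
    have := hSnonneg t ht
    linarith
  set B : ℝ := max 1 (M ^ p) with hB
  have hBpos : 0 < B := lt_of_lt_of_le one_pos (le_max_left _ _)
  have hIB : ∀ t : ℝ, 0 ≤ t → I t ^ p ≤ B := by
    intro t ht
    rcases le_total (I t) 1 with h1 | h1
    · exact le_trans (Real.rpow_le_one (hIpos t ht).le h1 hp.le) (le_max_left _ _)
    · exact le_trans (Real.rpow_le_rpow (hIpos t ht).le (hIM t ht) hp.le) (le_max_right _ _)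
  -- I tends to 0
  rw [tendsto_order]
  constructor
  · intro a ha
    filter_upwards [eventually_ge_atTop (0:ℝ)] with t ht
    exact lt_trans ha (hIpos t ht)
  · intro ε hε
    -- β S^q I^p eventually ≤ μ ε / 2
    have hbd : ∀ t : ℝ, 0 ≤ t → β * S t ^ q * I t ^ p ≤
        β * S₀ ^ q * B * Real.exp (-(c * t)) ^ q := by
      intro t ht
      have h1 : S t ^ q ≤ (S₀ * Real.exp (-(c * t))) ^ q :=
        Real.rpow_le_rpow (hSnonneg t ht) (hSle t ht) hq0.le
      rw [Real.mul_rpow hS₀.le (Real.exp_pos _).le] at h1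
      have h2 : 0 ≤ S t ^ q := Real.rpow_nonneg (hSnonneg t ht) q
      have h3 := hIB t ht
      have h4 : 0 ≤ I t ^ p := (Real.rpow_pos_of_pos (hIpos t ht) p).le
      have h5 : (0:ℝ) < S₀ ^ q := Real.rpow_pos_of_pos hS₀ q
      have h6 : (0:ℝ) < Real.exp (-(c * t)) ^ q := Real.rpow_pos_of_pos (Real.exp_pos _) q
      have h7 : S t ^ q * I t ^ p ≤ S₀ ^ q * Real.exp (-(c * t)) ^ q * B :=
        mul_le_mul h1 h3 h4 (by positivity)
      nlinarith [mul_le_mul_of_nonneg_left h7 hβ.le]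
    have hphi : Tendsto (fun t => β * S₀ ^ q * B * Real.exp (-(c * t)) ^ q) atTop (𝓝 0) := by
      have h1 : Tendsto (fun t : ℝ => -(c * t) * q) atTop atBot := by
        apply Tendsto.atBot_mul_const hq0
        apply tendsto_neg_atBot_iff.mpr
        exact Tendsto.const_mul_atTop hcpos tendsto_id
      have h2 : Tendsto (fun t : ℝ => Real.exp (-(c * t)) ^ q) atTop (𝓝 0) := by
        simpa [Function.comp_def, ← Real.exp_mul] using Real.tendsto_exp_atBot.comp h1
      simpa using h2.const_mul (β * S₀ ^ q * B)
    have hev : ∀ᶠ t in atTop, β * S₀ ^ q * B * Real.exp (-(c * t)) ^ q < μ * ε / 2 :=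
      hphi.eventually_lt_const (by positivity)
    obtain ⟨t₀, ht₀⟩ := ((hev.and (eventually_ge_atTop (0:ℝ))).exists_forall_of_atTop)
    have ht₀0 : 0 ≤ t₀ := (ht₀ t₀ le_rfl).2
    have hsmall : ∀ t : ℝ, t₀ ≤ t → β * S t ^ q * I t ^ p ≤ μ * ε / 2 := by
      intro t ht
      exact le_trans (hbd t (le_trans ht₀0 ht)) (ht₀ t ht).1.le
    -- J t = I t * exp (μ t) - (ε/2) exp (μ t) antitone on [t₀, ∞)
    have hJanti : AntitoneOn (fun t => I t * Real.exp (μ * t) - ε / 2 * Real.exp (μ * t))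
        (Set.Ici t₀) := by
      apply myAnti
      · exact ((hIcont.mono (fun x hx => le_trans ht₀0 hx)).mul (by fun_prop)).sub
          (by fun_prop : ContinuousOn (fun t : ℝ => ε / 2 * Real.exp (μ * t)) _)
      intro x hx
      have hx0 : 0 < x := lt_of_le_of_lt ht₀0 hx
      refine ⟨_, ((hIode x hx0).mul (hexp μ x)).sub ((hexp μ x).const_mul (ε / 2)), ?_⟩
      have hs := hsmall x hx.le
      have he : 0 < Real.exp (μ * x) := Real.exp_pos _
      nlinarith
    set C : ℝ := I t₀ * Real.exp (μ * t₀) - ε / 2 * Real.exp (μ * t₀) with hC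
    have hIbd : ∀ t : ℝ, t₀ ≤ t → I t ≤ ε / 2 + C * Real.exp (-(μ * t)) := by
      intro t ht
      have h := hJanti (Set.self_mem_Ici) (Set.mem_Ici.2 ht) ht
      have he : 0 < Real.exp (μ * t) := Real.exp_pos _
      rw [Real.exp_neg]
      calc I t = (I t * Real.exp (μ * t)) * (Real.exp (μ * t))⁻¹ := by field_simp
        _ ≤ (ε / 2 * Real.exp (μ * t) + C) * (Real.exp (μ * t))⁻¹ := by
            apply mul_le_mul_of_nonneg_right _ (inv_nonneg.2 he.le)
            have h2 : I t * Real.exp (μ * t) - ε / 2 * Real.exp (μ * t) ≤ C := h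
            linarith
        _ = ε / 2 + C * (Real.exp (μ * t))⁻¹ := by field_simp
    have hCtend : Tendsto (fun t => C * Real.exp (-(μ * t))) atTop (𝓝 0) := by
      have h1 : Tendsto (fun t : ℝ => -(μ * t)) atTop atBot := by
        apply tendsto_neg_atBot_iff.mpr
        exact Tendsto.const_mul_atTop hμ tendsto_id
      have := Real.tendsto_exp_atBot.comp h1
      simpa using this.const_mul C
    have hev2 : ∀ᶠ t in atTop, C * Real.exp (-(μ * t)) < ε / 2 :=
      hCtend.eventually_lt_const (by positivity)
    filter_upwards [eventually_ge_atTop t₀, hev2] with t ht h2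
    calc I t ≤ ε / 2 + C * Real.exp (-(μ * t)) := hIbd t ht
      _ < ε / 2 + ε / 2 := by linarith
      _ = ε := by ring
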